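/- The greatest conjugate (rotation) of a primitive word under lexicographic order is border-free. -/
import Mathlib


open List

universe u

/-- The factor `w[i..j]` of a word (inclusive positions). -/
def factor {α : Type u} (w : List α) (i j : ℕ) : List α := (w.drop i).take (j - i + 1)

/-- `p` is a period length of the word `u`. -/
def HasPeriodLen {α : Type u} (u : List α) (p : ℕ) : Prop :=
  1 ≤ p ∧ ∀ k, k + p < u.length → u[k]? = u[k + p]?

/-- The smallest period of a word. -/
noncomputable def minPeriod {α : Type u} (u : List α) : ℕ := sInf {p | HasPeriodLen u p}

/-- `[i..j]` is a run in `w`: the factor is periodic with smallest period at most half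
its length, and the periodicity extends neither to the left nor to the right. -/
def IsRun {α : Type u} (w : List α) (i j : ℕ) : Prop :=
  i < j ∧ j < w.length ∧
  2 * minPeriod (factor w i j) ≤ j - i + 1 ∧
  (0 < i → minPeriod (factor w i j) < minPeriod (factor w (i - 1) j)) ∧
  (j + 1 < w.length → minPeriod (factor w i j) < minPeriod (factor w i (j + 1)))
/-- A border of `u`: a nonempty proper prefix that is also a suffix. -/
def IsBorder {α : Type u} (b u : List α) : Prop := b ≠ [] ∧ b ≠ u ∧ b <+: u ∧ b <:+ u

/-- A word is border-free if it has no border. -/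
def BorderFree {α : Type u} (u : List α) : Prop := ∀ b, ¬ IsBorder b u
/-- `listPow u n` is the `n`-th power `u^n` of the word `u`. -/
def listPow {α : Type u} (v : List α) : ℕ → List α
  | 0 => []
  | n + 1 => v ++ listPow v n

/-- A word is primitive if it is not a proper power. -/
def Primitive {α : Type u} (v : List α) : Prop :=
  v ≠ [] ∧ ∀ r n, 2 ≤ n → v ≠ listPow r n

/-- `c` is a conjugate (rotation) of `v`. -/
def IsConjWord {α : Type u} (v c : List α) : Prop := ∃ s t, v = s ++ t ∧ c = t ++ s

section AuxLemmas

variable {α : Type u}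

theorem listPow_add (z : List α) (m n : ℕ) :
    listPow z (m + n) = listPow z m ++ listPow z n := by
  induction m with
  | zero => simp [listPow]
  | succ m ih => simp [listPow, Nat.succ_add, ih]

theorem length_listPow (z : List α) (n : ℕ) :
    (listPow z n).length = n * z.length := by
  induction n with
  | zero => simp [listPow]
  | succ n ih => simp [listPow, ih, Nat.succ_mul]; ring

theorem comm_imp_pow : ∀ n (b s : List α), b.length + s.length ≤ n → b ++ s = s ++ b →
    ∃ z i j, b = listPow z i ∧ s = listPow z j := by
  intro n
  induction n with
  | zero =>
    intro b s hlen _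
    have hb : b = [] := by
      cases b with
      | nil => rfl
      | cons a t => simp at hlen
    have hs : s = [] := by
      cases s with
      | nil => rfl
      | cons a t => simp at hlen
    exact ⟨[], 0, 0, by simp [hb, listPow], by simp [hs, listPow]⟩
  | succ n ih =>
    intro b s hlen h
    by_cases hb : b = []
    · exact ⟨s, 0, 1, by simp [hb, listPow], by simp [listPow]⟩
    by_cases hs : s = []
    · exact ⟨b, 1, 0, by simp [listPow], by simp [hs, listPow]⟩
    rcases le_total b.length s.length with hbs | hsb
    · -- b is a prefix of s
      have htake : b = s.take b.length := by
        have := congrArg (fun l => List.take b.length l) h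
        simpa [List.take_left, List.take_append_of_le_length hbs] using this
      set s' := s.drop b.length with hs'
      have hsplit : s = b ++ s' := by
        conv_lhs => rw [← List.take_append_drop b.length s]
        rw [← htake]
      have hcomm : b ++ s' = s' ++ b := by
        have h2 : b ++ (b ++ s') = (b ++ s') ++ b := by rw [← hsplit]; exact h
        rw [List.append_assoc] at h2
        exact List.append_cancel_left h2
      have hblen : 1 ≤ b.length := by
        cases b with
        | nil => exact absurd rfl hb
        | cons a t => simp
      have hlen' : b.length + s'.length ≤ n := by
        have : s'.length = s.length - b.length := by simp [hs']
        omega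
      obtain ⟨z, i, j, hbz, hsz⟩ := ih b s' hlen' hcomm
      exact ⟨z, i, i + j, hbz, by rw [hsplit, hbz, hsz, ← listPow_add]⟩
    · -- s is a prefix of b
      have htake : s = b.take s.length := by
        have := congrArg (fun l => List.take s.length l) h.symm
        simpa [List.take_left, List.take_append_of_le_length hsb] using this
      set b' := b.drop s.length with hb'
      have hsplit : b = s ++ b' := by
        conv_lhs => rw [← List.take_append_drop s.length b]
        rw [← htake]
      have hcomm : s ++ b' = b' ++ s := by
        have h2 : s ++ (s ++ b') = (s ++ b') ++ s := by rw [← hsplit]; exact h.symm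
        rw [List.append_assoc] at h2
        exact List.append_cancel_left h2
      have hslen : 1 ≤ s.length := by
        cases s with
        | nil => exact absurd rfl hs
        | cons a t => simp
      have hlen' : s.length + b'.length ≤ n := by
        have : b'.length = b.length - s.length := by simp [hb']
        omega
      obtain ⟨z, i, j, hsz, hbz⟩ := ih s b' hlen' hcomm
      exact ⟨z, i + j, i, by rw [hsplit, hsz, hbz, ← listPow_add], hsz⟩

theorem listPow_ne_nil_pos {z : List α} {i : ℕ} (h : listPow z i ≠ []) : 1 ≤ i := by
  cases i with
  | zero => simp [listPow] at h
  | succ n => omega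

theorem comm_imp_pow2 {b s : List α} (hb : b ≠ []) (hs : s ≠ []) (h : b ++ s = s ++ b) :
    ∃ z k, 2 ≤ k ∧ b ++ s = listPow z k := by
  obtain ⟨z, i, j, hbz, hsz⟩ :=
    comm_imp_pow (b.length + s.length) b s le_rfl h
  have hi : 1 ≤ i := listPow_ne_nil_pos (hbz ▸ hb)
  have hj : 1 ≤ j := listPow_ne_nil_pos (hsz ▸ hs)
  exact ⟨z, i + j, by omega, by rw [hbz, hsz, ← listPow_add]⟩

theorem rot_core (z1 z2 : List α) : ∀ m,
    z2 ++ listPow (z1 ++ z2) m ++ z1 = listPow (z2 ++ z1) (m + 1) := by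
  intro m
  induction m with
  | zero => simp [listPow]
  | succ m ih =>
    calc z2 ++ listPow (z1 ++ z2) (m + 1) ++ z1
        = (z2 ++ z1) ++ (z2 ++ listPow (z1 ++ z2) m ++ z1) := by
          simp [listPow, List.append_assoc]
      _ = listPow (z2 ++ z1) (m + 2) := by rw [ih]; simp [listPow]

theorem rot_full (z : List α) (k : ℕ) (hk : 1 ≤ k) :
    (listPow z k).rotate z.length = listPow z k := by
  obtain ⟨m, rfl⟩ : ∃ m, k = m + 1 := ⟨k - 1, by omega⟩
  have hle : z.length ≤ (listPow z (m + 1)).length := by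
    rw [length_listPow]; nlinarith
  rw [List.rotate_eq_drop_append_take hle]
  have h1 : listPow z (m + 1) = z ++ listPow z m := rfl
  rw [h1, List.drop_left, List.take_left]
  rw [show listPow z m ++ z = listPow z m ++ listPow z 1 by simp [listPow],
    ← listPow_add]
  simp [listPow_add, listPow]

theorem rot_full_mul (z : List α) (k q : ℕ) (hk : 1 ≤ k) :
    (listPow z k).rotate (q * z.length) = listPow z k := by
  induction q with
  | zero => simp
  | succ q ih =>
    rw [Nat.succ_mul, ← List.rotate_rotate, ih, rot_full z k hk]

theorem rotate_listPow (z : List α) (k n : ℕ) (hk : 1 ≤ k) (hz : z ≠ []) :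
    ∃ z', (listPow z k).rotate n = listPow z' k := by
  have hzl : 0 < z.length := List.length_pos_iff.mpr hz
  obtain ⟨m, rfl⟩ : ∃ m, k = m + 1 := ⟨k - 1, by omega⟩
  have hdecomp : n = (n / z.length) * z.length + n % z.length := by
    rw [Nat.mul_comm]; exact (Nat.div_add_mod n z.length).symm
  rw [hdecomp, ← List.rotate_rotate, rot_full_mul z (m + 1) _ hk]
  set r := n % z.length with hr
  have hrlt : r < z.length := Nat.mod_lt _ hzl
  refine ⟨z.drop r ++ z.take r, ?_⟩
  have hle : r ≤ (listPow z (m + 1)).length := by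
    rw [length_listPow]; nlinarith
  rw [List.rotate_eq_drop_append_take hle]
  have h1 : listPow z (m + 1) = (z.take r ++ z.drop r) ++ listPow z m := by
    rw [List.take_append_drop]; rfl
  have htl : (z.take r).length = r := by simp [hrlt.le]
  rw [h1, List.append_assoc, List.drop_left' htl, List.take_left' htl]
  have := rot_core (z.take r) (z.drop r) m
  rw [List.take_append_drop] at this
  exact this

theorem lex_append_same {α : Type u} [LinearOrder α] :
    ∀ {p s : List α}, List.Lex (· < ·) p s → p.length = s.length →
      ∀ b, List.Lex (· < ·) (p ++ b) (s ++ b)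
  | _, _, .nil, hlen, b => by simp at hlen
  | _, _, .cons h, hlen, b => .cons (lex_append_same h (by simpa using hlen) b)
  | _, _, .rel h, _, b => .rel h


theorem listPow_nil (k : ℕ) : listPow ([] : List α) k = [] := by
  induction k with
  | zero => rfl
  | succ k ih => simp [listPow, ih]

end AuxLemmas

section AuxConj

variable {α : Type u}

theorem rotated_of_isConj {v d : List α} (h : IsConjWord v d) : v ~r d := by
  obtain ⟨s, t, rfl, rfl⟩ := h
  exact List.isRotated_append

theorem isConj_of_rotated {v d : List α} (h : v ~r d) : IsConjWord v d := by
  obtain ⟨n, hn⟩ := h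
  by_cases hv : v = []
  · subst hv
    simp only [List.rotate_nil] at hn
    exact ⟨[], [], rfl, hn.symm⟩
  · have hm : n % v.length ≤ v.length := (Nat.mod_lt _ (List.length_pos_iff.mpr hv)).le
    refine ⟨v.take (n % v.length), v.drop (n % v.length),
      (List.take_append_drop _ v).symm, ?_⟩
    rw [← hn, ← List.rotate_mod, List.rotate_eq_drop_append_take hm]

end AuxConj

/-- The greatest conjugate of a primitive word under lexicographic order is border-free. -/
theorem greatest_conjugate_borderFree {α : Type u} [LinearOrder α] (v c : List α)
    (hv : Primitive v) (hc : IsConjWord v c)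
    (hmax : ∀ c', IsConjWord v c' → c' ≤ c) :
    BorderFree c := by
  rintro b ⟨hbne, hbc, ⟨s, hs⟩, ⟨p, hp⟩⟩
  -- hs : b ++ s = c, hp : p ++ b = c
  have hvr : v ~r c := rotated_of_isConj hc
  have hsne : s ≠ [] := by rintro rfl; exact hbc (by simpa using hs)
  have hlen : p.length = s.length := by
    have h1 := congrArg List.length hs
    have h2 := congrArg List.length hp
    simp only [List.length_append] at h1 h2
    omega
  have hpne : p ≠ [] := by
    intro h
    have : 0 < s.length := List.length_pos_iff.mpr hsne
    rw [h] at hlen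
    simp at hlen
    omega
  have key1 : b ++ p ≤ b ++ s := by
    have h1 : IsConjWord v (b ++ p) :=
      isConj_of_rotated (hvr.trans (by rw [← hp]; exact List.isRotated_append))
    have h2 := hmax _ h1
    rwa [← hs] at h2
  have key2 : s ++ b ≤ p ++ b := by
    have h1 : IsConjWord v (s ++ b) :=
      isConj_of_rotated (hvr.trans (by rw [← hs]; exact List.isRotated_append))
    have h2 := hmax _ h1
    rwa [← hp] at h2
  have hps : p ≤ s := by
    by_contra hn
    rw [not_le] at hn
    have hlt : b ++ s < b ++ p := List.Lex.append_left _ hn b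
    exact absurd key1 (not_le.mpr hlt)
  have hsp : s ≤ p := by
    by_contra hn
    rw [not_le] at hn
    have hlt : p ++ b < s ++ b := lex_append_same hn hlen b
    exact absurd key2 (not_le.mpr hlt)
  have hpseq : p = s := le_antisymm hps hsp
  subst hpseq
  have hcomm : b ++ p = p ++ b := by rw [hs, hp]
  obtain ⟨z, k, hk2, hzk⟩ := comm_imp_pow2 hbne hpne hcomm
  have hcz : c = listPow z k := by rw [← hs, hzk]
  have hzne : z ≠ [] := by
    rintro rfl
    rw [listPow_nil] at hzk
    exact hbne (List.append_eq_nil_iff.mp hzk).1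
  obtain ⟨n, hn⟩ := hvr.symm
  obtain ⟨z', hz'⟩ := rotate_listPow z k n (by omega) hzne
  exact hv.2 z' k hk2 (by rw [← hn, hcz, hz'])
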